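/- Let α > 1, y = 4(α−1)(α²+3α+1)/(α(2α²+α+2)), x = αy. Then y > 0, x > y, and there exist real A < 0, B < 0, C > 0 such that P(t) = A/t + B·t⁴ + C·t² + 4 satisfies P(y) = P(x) = 0, P'(y) = 2, P'(x) = −2. -/

import Mathlib

lemma derivP (A B C t : ℝ) (ht : t ≠ 0) :
    deriv (fun s : ℝ => A/s + B*s^4 + C*s^2 + 4) t = -A/t^2 + 4*B*t^3 + 2*C*t := by
  have h1 : HasDerivAt (fun s : ℝ => A/s) (A * (-(t^2)⁻¹)) t := by
    simpa [div_eq_mul_inv] using (hasDerivAt_inv ht).const_mul A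
  have h2 : HasDerivAt (fun s : ℝ => B*s^4) (B * (4*t^3)) t := by
    simpa using (hasDerivAt_pow 4 t).const_mul B
  have h3 : HasDerivAt (fun s : ℝ => C*s^2) (C * (2*t^1)) t := by
    simpa using (hasDerivAt_pow 2 t).const_mul C
  have h : HasDerivAt (fun s : ℝ => A/s + B*s^4 + C*s^2 + 4)
      (A * (-(t^2)⁻¹) + B * (4*t^3) + C * (2*t^1)) t :=
    ((h1.add h2).add h3).add_const 4
  rw [h.deriv]
  field_simp

theorem exists_ABC (α : ℝ) (hα : 1 < α)
    (y x : ℝ)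
    (hy : y = 4*(α - 1)*(α^2 + 3*α + 1) / (α*(2*α^2 + α + 2)))
    (hx : x = α * y) :
    0 < y ∧ y < x ∧
    ∃ A B C : ℝ, A < 0 ∧ B < 0 ∧ 0 < C ∧
      (∀ P : ℝ → ℝ, P = (fun t => A/t + B*t^4 + C*t^2 + 4) →
        P y = 0 ∧ P x = 0 ∧ deriv P y = 2 ∧ deriv P x = -2) := by
  have ha0 : (0:ℝ) < α := by linarith
  have h1 : (0:ℝ) < α - 1 := by linarith
  have h2 : (0:ℝ) < α^2 + 3*α + 1 := by nlinarith
  have h3 : (0:ℝ) < 2*α^2 + α + 2 := by nlinarith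
  have hy0 : 0 < y := by
    rw [hy]; apply div_pos
    · positivity
    · positivity
  have hyx : y < x := by
    rw [hx]; nlinarith
  have hx0 : 0 < x := lt_trans hy0 hyx
  refine ⟨hy0, hyx, ?_⟩
  set A : ℝ := -(32*(α-1)*(α+1)*(α^2+3*α+1)) / (4*α^4+4*α^3+9*α^2+4*α+4) with hA
  set B : ℝ := -(α^3*(8*α^6+12*α^5+30*α^4+25*α^3+30*α^2+12*α+8)) /
      (64*(α-1)^4*(α^2+3*α+1)^4) with hB
  set C : ℝ := α*(2*α^2+α+2) / (4*(α^2+3*α+1)^2) with hC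
  have hd1 : (0:ℝ) < 4*α^4+4*α^3+9*α^2+4*α+4 := by positivity
  refine ⟨A, B, C, ?_, ?_, ?_, ?_⟩
  · rw [hA]
    apply div_neg_of_neg_of_pos _ hd1
    have : (0:ℝ) < 32*(α-1)*(α+1)*(α^2+3*α+1) := by positivity
    linarith
  · rw [hB]
    apply div_neg_of_neg_of_pos
    · have : (0:ℝ) < α^3*(8*α^6+12*α^5+30*α^4+25*α^3+30*α^2+12*α+8) := by positivity
      linarith
    · positivity
  · rw [hC]; positivity
  · intro P hP
    have hyne : y ≠ 0 := ne_of_gt hy0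
    have hxne : x ≠ 0 := ne_of_gt hx0
    have ha0' : α ≠ 0 := ne_of_gt ha0
    have h1' : α - 1 ≠ 0 := ne_of_gt h1
    have h2' : α^2 + 3*α + 1 ≠ 0 := ne_of_gt h2
    have h3' : 2*α^2 + α + 2 ≠ 0 := ne_of_gt h3
    have hd1' : 4*α^4+4*α^3+9*α^2+4*α+4 ≠ 0 := ne_of_gt hd1
    subst hP
    refine ⟨?_, ?_, ?_, ?_⟩
    · show A/y + B*y^4 + C*y^2 + 4 = 0
      rw [hA, hB, hC, hy]
      field_simp
      ring
    · show A/x + B*x^4 + C*x^2 + 4 = 0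
      rw [hA, hB, hC, hx, hy]
      field_simp
      ring
    · rw [derivP A B C y hyne, hA, hB, hC, hy]
      field_simp
      ring
    · rw [derivP A B C x hxne, hA, hB, hC, hx, hy]
      field_simp
      ring
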